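/- Let f : ℝ^d → ℝ be a C² function satisfying f(x+h) + f(x−h) − 2f(x) ≤ C ε² |h|² for all x, h ∈ ℝ^d and with |∇f(x)| ≤ Cε everywhere (e.g. f ∈ F(C,ε)). Then for every x ∈ ℝ^d, Hf(x) ≤ f(x) − ½|∇f(x)|² + ½ C³ ε⁴. -/

import Mathlib

open MeasureTheory Real

/-- The quadratic infimum convolution `Hf(x) = inf_y ( f(x+y) + |y|²/2 )`. -/
noncomputable def Hconv {E : Type*} [NormedAddCommGroup E] (f : E → ℝ) (x : E) : ℝ :=
  ⨅ y : E, (f (x + y) + ‖y‖ ^ 2 / 2)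

open Filter Topology

local notation "⟪" x ", " y "⟫" => @inner ℝ _ _ x y

lemma upper_taylor {E : Type*} [NormedAddCommGroup E] [InnerProductSpace ℝ E]
    [CompleteSpace E] (f : E → ℝ) (hf : Differentiable ℝ f) (K : ℝ)
    (hii : ∀ x h : E, f (x + h) + f (x - h) - 2 * f x ≤ K * ‖h‖ ^ 2)
    (x h : E) :
    f (x + h) ≤ f x + ⟪gradient f x, h⟫ + K * ‖h‖ ^ 2 / 2 := by
  set g : ℝ → ℝ := fun t => f (x + t • h) with hg
  set c : ℝ := K * ‖h‖ ^ 2 / 2 with hc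
  -- derivative of g at 0
  have hcurve : HasDerivAt (fun t : ℝ => x + t • h) h 0 := by
    simpa using ((hasDerivAt_id (0 : ℝ)).smul_const h).const_add x
  have hfd : HasFDerivAt f (fderiv ℝ f x) ((fun t : ℝ => x + t • h) 0) := by
    simpa using (hf x).hasFDerivAt
  have hgd : HasDerivAt g (fderiv ℝ f x h) 0 := hfd.comp_hasDerivAt 0 hcurve
  have hdinner : (fderiv ℝ f x) h = ⟪gradient f x, h⟫ := by
    rw [gradient, ← InnerProductSpace.toDual_apply_apply,
      (InnerProductSpace.toDual ℝ E).apply_symm_apply]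
  -- step inequality
  have step : ∀ t : ℝ, 0 < t →
      (g t - g 0) / t ≤ (g (t / 2) - g 0) / (t / 2) + c * (t / 2) := by
    intro t ht
    have h1 := hii (x + (t / 2) • h) ((t / 2) • h)
    have e1 : x + (t / 2) • h + (t / 2) • h = x + t • h := by
      rw [add_assoc, ← add_smul]; ring_nf
    have e2 : x + (t / 2) • h - (t / 2) • h = x + (0 : ℝ) • h := by
      simp
    rw [e1, e2] at h1
    have h2 : g t + g 0 - 2 * g (t / 2) ≤ K * ((t / 2) ^ 2 * ‖h‖ ^ 2) := by
      simpa [hg, norm_smul, mul_pow, abs_of_pos ht] using h1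
    rw [div_le_iff₀ ht]
    have e3 : ((g (t / 2) - g 0) / (t / 2) + c * (t / 2)) * t
        = 2 * (g (t / 2) - g 0) + c * (t / 2) * t := by
      field_simp
    have e4 : c * (t / 2) * t = K * ((t / 2) ^ 2 * ‖h‖ ^ 2) := by rw [hc]; ring
    rw [e3]; linarith
  -- induction
  have key : ∀ n : ℕ, g 1 - g 0 ≤
      (g ((1/2 : ℝ) ^ n) - g 0) / ((1/2 : ℝ) ^ n) + c * (1 - (1/2 : ℝ) ^ n) := by
    intro n
    induction n with
    | zero => simp
    | succ n ih =>
      have hp : (0:ℝ) < (1/2 : ℝ) ^ n := by positivity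
      have := step ((1/2 : ℝ) ^ n) hp
      have e : (1/2 : ℝ) ^ n / 2 = (1/2 : ℝ) ^ (n + 1) := by ring
      rw [e] at this
      calc g 1 - g 0 ≤ (g ((1/2 : ℝ) ^ n) - g 0) / ((1/2 : ℝ) ^ n) + c * (1 - (1/2 : ℝ) ^ n) := ih
        _ ≤ (g ((1/2 : ℝ) ^ (n+1)) - g 0) / ((1/2 : ℝ) ^ (n+1)) + c * (1/2:ℝ)^(n+1) + c * (1 - (1/2 : ℝ) ^ n) := by linarith
        _ = (g ((1/2 : ℝ) ^ (n+1)) - g 0) / ((1/2 : ℝ) ^ (n+1)) + c * (1 - (1/2 : ℝ) ^ (n+1)) := by ring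
  -- limit
  have hslope : Tendsto (fun n : ℕ => (g ((1/2 : ℝ) ^ n) - g 0) / ((1/2 : ℝ) ^ n))
      atTop (𝓝 (fderiv ℝ f x h)) := by
    have h0 : Tendsto (fun n : ℕ => ((1/2 : ℝ) ^ n)) atTop (𝓝[≠] 0) := by
      rw [tendsto_nhdsWithin_iff]
      refine ⟨tendsto_pow_atTop_nhds_zero_of_lt_one (by norm_num) (by norm_num), ?_⟩
      exact Eventually.of_forall fun n => Set.mem_compl_singleton_iff.mpr (by positivity : (0:ℝ) < (1/2:ℝ)^n).ne'
    refine ((hasDerivAt_iff_tendsto_slope.mp hgd).comp h0).congr fun n => ?_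
    simp [slope_def_field, Function.comp, div_eq_mul_inv]
  have hlim : Tendsto (fun n : ℕ => (g ((1/2 : ℝ) ^ n) - g 0) / ((1/2 : ℝ) ^ n)
      + c * (1 - (1/2 : ℝ) ^ n)) atTop (𝓝 (fderiv ℝ f x h + c * (1 - 0))) := by
    exact hslope.add ((tendsto_const_nhds.sub
      (tendsto_pow_atTop_nhds_zero_of_lt_one (by norm_num) (by norm_num))).const_mul c)
  have hfin : g 1 - g 0 ≤ fderiv ℝ f x h + c * (1 - 0) :=
    ge_of_tendsto hlim (Eventually.of_forall key)
  have hg1 : g 1 = f (x + h) := by simp [hg]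
  have hg0 : g 0 = f x := by simp [hg]
  rw [hg1, hg0, hdinner] at hfin
  linarith

/-- Pointwise bound on `Hf`: if `f` is `C²`, satisfies
`f(x+h) + f(x−h) − 2f(x) ≤ Cε²|h|²` and `|∇f| ≤ Cε` everywhere (e.g. `f ∈ F(C,ε)`),
then `Hf(x) ≤ f(x) − ½|∇f(x)|² + ½C³ε⁴` for every `x`. -/
theorem Hconv_pointwise_bound (d : ℕ) (C ε : ℝ) (hC : 0 < C)
    (hε : ε ∈ Set.Ioc (0 : ℝ) 1)
    (f : EuclideanSpace ℝ (Fin d) → ℝ) (hf : ContDiff ℝ 2 f)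
    (hii : ∀ x h : EuclideanSpace ℝ (Fin d),
      f (x + h) + f (x - h) - 2 * f x ≤ C * ε ^ 2 * ‖h‖ ^ 2)
    (hgrad : ∀ x, ‖gradient f x‖ ≤ C * ε) :
    ∀ x, Hconv f x ≤ f x - ‖gradient f x‖ ^ 2 / 2 + C ^ 3 * ε ^ 4 / 2 := by
  intro x
  have hdiff : Differentiable ℝ f := hf.differentiable (by norm_num)
  obtain ⟨hε0, hε1⟩ := hε
  set g : EuclideanSpace ℝ (Fin d) := gradient f x with hgdef
  -- norm of fderiv equals norm of gradient
  have hfnorm : ∀ z, ‖fderiv ℝ f z‖ ≤ C * ε := by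
    intro z
    have : ‖gradient f z‖ = ‖fderiv ℝ f z‖ := by
      rw [gradient]
      exact (InnerProductSpace.toDual ℝ (EuclideanSpace ℝ (Fin d))).symm.norm_map _
    rw [← this]; exact hgrad z
  -- Lipschitz bound
  have hlip : ∀ y : EuclideanSpace ℝ (Fin d), ‖f (x + y) - f x‖ ≤ C * ε * ‖x + y - x‖ := by
    intro y
    exact Convex.norm_image_sub_le_of_norm_fderiv_le
      (fun z _ => hdiff z) (fun z _ => hfnorm z)
      convex_univ (Set.mem_univ x) (Set.mem_univ (x + y))
  have hbdd : BddBelow (Set.range fun y : EuclideanSpace ℝ (Fin d) =>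
      f (x + y) + ‖y‖ ^ 2 / 2) := by
    refine ⟨f x - (C * ε) ^ 2 / 2, ?_⟩
    rintro _ ⟨y, rfl⟩
    have h1 := hlip y
    rw [add_sub_cancel_left] at h1
    have h2 : f (x + y) - f x ≥ -(C * ε * ‖y‖) := by
      have := abs_le.mp (by simpa [Real.norm_eq_abs] using h1)
      linarith [this.1]
    nlinarith [norm_nonneg y, sq_nonneg (‖y‖ - C * ε)]
  have hle : Hconv f x ≤ f (x + (-g)) + ‖-g‖ ^ 2 / 2 := ciInf_le hbdd (-g)
  have htay := upper_taylor f hdiff (C * ε ^ 2) hii x (-g)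
  have hinner : ⟪g, -g⟫ = -‖g‖ ^ 2 := by
    rw [inner_neg_right, real_inner_self_eq_norm_sq]
  rw [hinner] at htay
  have hnormneg : ‖-g‖ = ‖g‖ := norm_neg g
  rw [hnormneg] at htay hle
  have hgb : ‖g‖ ≤ C * ε := hgrad x
  have hfinal : C * ε ^ 2 * ‖g‖ ^ 2 ≤ C ^ 3 * ε ^ 4 := by
    have h1 : ‖g‖ ^ 2 ≤ (C * ε) ^ 2 := by nlinarith [norm_nonneg g]
    have h2 : (0:ℝ) ≤ C * ε ^ 2 := by positivity
    nlinarith [mul_le_mul_of_nonneg_left h1 h2]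
  calc Hconv f x ≤ f (x + (-g)) + ‖g‖ ^ 2 / 2 := hle
    _ ≤ f x + -‖g‖ ^ 2 + C * ε ^ 2 * ‖g‖ ^ 2 / 2 + ‖g‖ ^ 2 / 2 := by linarith
    _ ≤ f x - ‖g‖ ^ 2 / 2 + C ^ 3 * ε ^ 4 / 2 := by linarith
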